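/- Let k and α be real numbers with 0 < k ≤ 1 and 0 ≤ α ≤ 1, and set w = ((1+k)^α − 1)/k^α. Let a and b be real numbers with a > 0 and 0 ≤ b ≤ k·a. Then (a+b)^α ≤ a^α + w·b^α. -/

import Mathlib

open Real

private lemma aux_anti (α : ℝ) (hα0 : 0 < α) (hα1 : α ≤ 1) {u s : ℝ} (hu : 0 < u)
    (hus : u ≤ s) : (1 + s) ^ α - s ^ α ≤ (1 + u) ^ α - u ^ α := by
  have hder : ∀ x : ℝ, 0 < x → HasDerivAt (fun x : ℝ => (1 + x) ^ α - x ^ α)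
      (α * (1 + x) ^ (α - 1) - α * x ^ (α - 1)) x := by
    intro x hx0
    have h1 : HasDerivAt (fun x : ℝ => (1 + x) ^ α) ((1 + x) ^ (α - 1) * α * 1) x := by
      have := (Real.hasDerivAt_rpow_const (x := 1 + x) (p := α)
        (Or.inl (by positivity))).comp x ((hasDerivAt_id x).const_add 1)
      simpa [mul_comm, Function.comp_def] using this
    have h2 : HasDerivAt (fun x : ℝ => x ^ α) (α * x ^ (α - 1)) x :=
      Real.hasDerivAt_rpow_const (Or.inl hx0.ne')
    have : HasDerivAt (fun x : ℝ => (1 + x) ^ α - x ^ α)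
        ((1 + x) ^ (α - 1) * α * 1 - α * x ^ (α - 1)) x := h1.sub h2
    convert this using 1
    ring
  have key : AntitoneOn (fun x : ℝ => (1 + x) ^ α - x ^ α) (Set.Ici u) := by
    apply antitoneOn_of_deriv_nonpos (convex_Ici u)
    · intro x hx
      exact (hder x (lt_of_lt_of_le hu hx)).continuousAt.continuousWithinAt
    · intro x hx
      rw [interior_Ici] at hx
      exact (hder x (lt_of_le_of_lt hu.le hx)).differentiableAt.differentiableWithinAt
    · intro x hx
      rw [interior_Ici] at hx
      have hx0 : 0 < x := lt_of_le_of_lt hu.le hx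
      rw [(hder x hx0).deriv]
      have : (1 + x) ^ (α - 1) ≤ x ^ (α - 1) :=
        Real.rpow_le_rpow_of_nonpos hx0 (by linarith) (by linarith)
      nlinarith
  exact key (Set.self_mem_Ici) hus hus

private lemma aux_main (k α t : ℝ) (hk0 : 0 < k) (hα0 : 0 < α) (hα1 : α ≤ 1)
    (ht0 : 0 < t) (htk : t ≤ k) :
    (1 + t) ^ α ≤ 1 + ((1 + k) ^ α - 1) / k ^ α * t ^ α := by
  have hkα : (0:ℝ) < k ^ α := Real.rpow_pos_of_pos hk0 α
  have htα : (0:ℝ) < t ^ α := Real.rpow_pos_of_pos ht0 α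
  have hg : ∀ x : ℝ, 0 < x → ((1 + x) ^ α - 1) / x ^ α = (1 + 1/x) ^ α - (1/x) ^ α := by
    intro x hx
    have e1 : (1 + 1/x) = (1 + x)/x := by field_simp; ring
    rw [e1, Real.div_rpow (by positivity) hx.le, Real.div_rpow zero_le_one hx.le,
      Real.one_rpow, sub_div]
  have hmono : ((1 + t) ^ α - 1) / t ^ α ≤ ((1 + k) ^ α - 1) / k ^ α := by
    rw [hg t ht0, hg k hk0]
    exact aux_anti α hα0 hα1 (by positivity) (one_div_le_one_div_of_le ht0 htk)
  have h := mul_le_mul_of_nonneg_right hmono htα.le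
  rw [div_mul_cancel₀ _ htα.ne'] at h
  linarith

theorem stmt_7 (k α a b : ℝ) (hk0 : 0 < k) (hk1 : k ≤ 1) (hα0 : 0 ≤ α) (hα1 : α ≤ 1)
    (ha : 0 < a) (hb0 : 0 ≤ b) (hbk : b ≤ k * a) :
    (a + b) ^ α ≤ a ^ α + ((1 + k) ^ α - 1) / k ^ α * b ^ α := by
  rcases hα0.eq_or_lt with rfl | hα
  · norm_num [Real.rpow_zero]
  rcases hb0.eq_or_lt with rfl | hb
  · simp [Real.zero_rpow hα.ne']
  · set t := b / a with ht
    have ht0 : 0 < t := div_pos hb ha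
    have htk : t ≤ k := (div_le_iff₀ ha).mpr (by linarith)
    have key := aux_main k α t hk0 hα hα1 ht0 htk
    have hmul := mul_le_mul_of_nonneg_left key (Real.rpow_pos_of_pos ha α).le
    have h1 : a ^ α * (1 + t) ^ α = (a + b) ^ α := by
      rw [← Real.mul_rpow ha.le (by positivity)]
      congr 1
      rw [ht]
      field_simp
    have h2 : a ^ α * t ^ α = b ^ α := by
      rw [← Real.mul_rpow ha.le ht0.le]
      congr 1
      rw [ht]
      field_simp
    calc (a + b) ^ α = a ^ α * (1 + t) ^ α := h1.symm
      _ ≤ a ^ α * (1 + ((1 + k) ^ α - 1) / k ^ α * t ^ α) := hmul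
      _ = a ^ α + ((1 + k) ^ α - 1) / k ^ α * b ^ α := by rw [mul_add, mul_one, ← h2]; ring
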